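/- arXiv:1407.5486 — 2 statements merged into one kernel-verified Lean document; each statement's English description precedes it below -/
import Mathlib

section
/- Let A be a bounded linear operator on ℓ²(ℤ) and let (Aₙ)_{n∈ℕ} be a sequence of bounded linear operators on ℓ²(ℤ) that converges to A in the weak operator topology. Then N(A) ⊆ liminf_{n→∞} N(Aₙ); that is, every z ∈ N(A) is the limit of a sequence (zₙ)_{n∈ℕ} with zₙ ∈ N(Aₙ) for every n. -/
noncomputable section
open Filter Complex Topology
open scoped ENNReal

/-- The Hilbert space ℓ²(ℤ). -/
abbrev HZ := lp (fun _ : ℤ => ℂ) 2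

/-- The standard orthonormal basis of ℓ²(ℤ). -/
def eZ (i : ℤ) : HZ := lp.single 2 i 1

/-- Matrix entry `A_{i,j} = ⟨A e_j, e_i⟩` (inner product linear in the first slot,
here written in Mathlib's convention which is conjugate-linear in the first slot). -/
def entry (A : HZ →L[ℂ] HZ) (i j : ℤ) : ℂ := inner ℂ (eZ i) (A (eZ j))

/-- The (closed) numerical range `N(A) = clos {⟨Ax,x⟩ : ‖x‖ = 1}`. -/
def numRange (A : HZ →L[ℂ] HZ) : Set ℂ :=
  closure {z | ∃ x : HZ, ‖x‖ = 1 ∧ (inner ℂ x (A x) : ℂ) = z}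

/-- The numerical abscissa `r₀(A) = max {Re z : z ∈ N(A)}`. -/
def r0 (A : HZ →L[ℂ] HZ) : ℝ := sSup (Complex.re '' numRange A)

/-- The rotated numerical abscissa `r_φ(A) = max {Re z : z ∈ N(e^{iφ}A)}`. -/
def rphi (φ : ℝ) (A : HZ →L[ℂ] HZ) : ℝ := r0 (Complex.exp (φ * Complex.I) • A)

lemma memShift (k : ℤ) (x : HZ) : Memℓp (fun j => x (j - k)) 2 := by
  have h := lp.memℓp x
  rw [memℓp_gen_iff (by norm_num)] at h ⊢
  simpa [Function.comp_def] using ((Equiv.subRight k).summable_iff (f := fun i => ‖x i‖ ^ (2:ℝ≥0∞).toReal)).mpr h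

def shiftLM (k : ℤ) : HZ →ₗ[ℂ] HZ where
  toFun x := ⟨fun j => x (j - k), memShift k x⟩
  map_add' x y := by ext j; simp [lp.coeFn_add]; try rfl
  map_smul' c x := by ext j; simp [lp.coeFn_smul]

lemma shift_norm (k : ℤ) (x : HZ) : ‖shiftLM k x‖ = ‖x‖ := by
  rw [lp.norm_eq_tsum_rpow (by norm_num) x, lp.norm_eq_tsum_rpow (by norm_num) (shiftLM k x)]
  congr 1
  exact (Equiv.subRight k).tsum_eq (f := fun i => ‖x i‖ ^ (2:ℝ≥0∞).toReal)

/-- The shift operator `V_k` on ℓ²(ℤ), `(V_k x)_j = x_{j-k}`. -/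
def Vshift (k : ℤ) : HZ →L[ℂ] HZ :=
  LinearIsometry.toContinuousLinearMap ⟨shiftLM k, shift_norm k⟩

/-- `B` is a limit operator of `A`: there is a sequence of integers `h` with `|h m| → ∞`
such that `V_{-h_m} A V_{h_m} → B` strongly. -/
def IsLimOp (A B : HZ →L[ℂ] HZ) : Prop :=
  ∃ h : ℕ → ℤ, Tendsto (fun m => |h m|) atTop atTop ∧
    ∀ x : HZ, Tendsto (fun m => Vshift (-(h m)) (A (Vshift (h m) x))) atTop (𝓝 (B x))

/-- The operator spectrum: the set of all limit operators of `A`. -/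
def opSpec (A : HZ →L[ℂ] HZ) : Set (HZ →L[ℂ] HZ) := {B | IsLimOp A B}

/-- A band operator: only finitely many diagonals are nonzero. -/
def IsBandOp (A : HZ →L[ℂ] HZ) : Prop :=
  ∃ N : ℕ, ∀ i j : ℤ, (N : ℤ) < |i - j| → entry A i j = 0

/-- `M(U_n, …, U_m)`: the k-th diagonal has entries in `U k` for `n ≤ k ≤ m`,
and all other diagonals vanish. -/
def Mset (n m : ℤ) (U : ℤ → Set ℂ) : Set (HZ →L[ℂ] HZ) :=
  {A | ∀ i k : ℤ, (n ≤ k → k ≤ m → entry A (i + k) i ∈ U k) ∧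
      (¬(n ≤ k ∧ k ≤ m) → entry A (i + k) i = 0)}

/-- The orthogonal projection `P_{k,l}` onto `span{e_k, …, e_l}`. -/
def projIcc (k l : ℤ) : HZ →L[ℂ] HZ :=
  ∑ i ∈ Finset.Icc k l, (innerSL ℂ (eZ i)).smulRight (eZ i)

/-- The finite matrix `b` placed in `ℓ²(ℤ)` with rows/columns at positions `k, …, k+s`. -/
def embedMat (k : ℤ) (s : ℕ) (b : Fin (s+1) → Fin (s+1) → ℂ) : HZ →L[ℂ] HZ :=
  ∑ p : Fin (s+1), ∑ q : Fin (s+1),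
    b p q • (innerSL ℂ (eZ (k + (q : ℤ)))).smulRight (eZ (k + (p : ℤ)))

/-- A finite square matrix whose k-th diagonal entries lie in `U k` for `n ≤ k ≤ m`
and whose remaining entries vanish. -/
def finPattern (n m : ℤ) (U : ℤ → Set ℂ) (s : ℕ) (b : Fin (s+1) → Fin (s+1) → ℂ) : Prop :=
  ∀ p q : Fin (s+1), (n ≤ (p : ℤ) - (q : ℤ) → (p : ℤ) - (q : ℤ) ≤ m →
      b p q ∈ U ((p : ℤ) - (q : ℤ))) ∧
    (¬(n ≤ (p : ℤ) - (q : ℤ) ∧ (p : ℤ) - (q : ℤ) ≤ m) → b p q = 0)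

/-- Pseudo-ergodic operators `ΨE(U_n, …, U_m)`. -/
def PsiE (n m : ℤ) (U : ℤ → Set ℂ) : Set (HZ →L[ℂ] HZ) :=
  {A | A ∈ Mset n m U ∧ ∀ ε > (0:ℝ), ∀ (s : ℕ) (b : Fin (s+1) → Fin (s+1) → ℂ),
    finPattern n m U s b → ∃ k : ℤ,
      ‖projIcc k (k + s) ∘L A ∘L projIcc k (k + s) - embedMat k s b‖ ≤ ε}

/-- The essential spectrum: the set of `λ` such that `A - λI` is not Fredholm. -/
def essSpec (A : HZ →L[ℂ] HZ) : Set ℂ :=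
  {lam | ¬(FiniteDimensional ℂ (LinearMap.ker ((A - lam • (1 : HZ →L[ℂ] HZ) : HZ →L[ℂ] HZ) : HZ →ₗ[ℂ] HZ)) ∧
      FiniteDimensional ℂ ((LinearMap.range ((A - lam • (1 : HZ →L[ℂ] HZ) : HZ →L[ℂ] HZ) : HZ →ₗ[ℂ] HZ))ᗮ))}

/-- The Hilbert space ℓ²(ℕ). -/
abbrev HN := lp (fun _ : ℕ => ℂ) 2

def eN (i : ℕ) : HN := lp.single 2 i 1

def entryN (A : HN →L[ℂ] HN) (i j : ℕ) : ℂ := inner ℂ (eN i) (A (eN j))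

def numRangeN (A : HN →L[ℂ] HN) : Set ℂ :=
  closure {z | ∃ x : HN, ‖x‖ = 1 ∧ (inner ℂ x (A x) : ℂ) = z}

def r0N (A : HN →L[ℂ] HN) : ℝ := sSup (Complex.re '' numRangeN A)

/-- If `Aₙ → A` in the weak operator topology, then every point of the
numerical range of `A` is a limit of a sequence of points `zₙ ∈ N(Aₙ)`. -/
theorem numRange_subset_liminf_of_weak_tendsto
    (A : HZ →L[ℂ] HZ) (As : ℕ → (HZ →L[ℂ] HZ))
    (hweak : ∀ x y : HZ,
      Tendsto (fun n => (inner ℂ y ((As n) x) : ℂ)) atTop (𝓝 (inner ℂ y (A x) : ℂ)))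
    (z : ℂ) (hz : z ∈ numRange A) :
    ∃ zs : ℕ → ℂ, (∀ n, zs n ∈ numRange (As n)) ∧ Tendsto zs atTop (𝓝 z) := by

  have hx : ∀ k : ℕ, ∃ x : HZ, ‖x‖ = 1 ∧
      dist (inner ℂ x (A x) : ℂ) z < 1 / (k + 1) := by
    intro k
    have hk : (0:ℝ) < 1 / (k + 1) := by positivity
    obtain ⟨w, hw, hdist⟩ := Metric.mem_closure_iff.mp hz _ hk
    obtain ⟨x, hx1, hx2⟩ := hw
    exact ⟨x, hx1, by rw [hx2, dist_comm]; exact hdist⟩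
  choose x hx1 hx2 using hx
  have hN : ∀ k : ℕ, ∃ N : ℕ, ∀ n ≥ N,
      dist (inner ℂ (x k) ((As n) (x k)) : ℂ) (inner ℂ (x k) (A (x k))) < 1 / (k + 1) := by
    intro k
    have := (Metric.tendsto_atTop.mp (hweak (x k) (x k))) (1 / (k + 1)) (by positivity)
    exact this
  choose N hNspec using hN
  set kf : ℕ → ℕ := fun n => Nat.findGreatest (fun k => N k ≤ n) n with hkf
  refine ⟨fun n => inner ℂ (x (kf n)) ((As n) (x (kf n))), fun n => ?_, ?_⟩
  · exact subset_closure ⟨x (kf n), hx1 _, rfl⟩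
  · rw [Metric.tendsto_atTop]
    intro ε hε
    obtain ⟨K, hK⟩ := exists_nat_one_div_lt (half_pos hε)
    refine ⟨max K (N K), fun n hn => ?_⟩
    have hKn : K ≤ n := le_trans (le_max_left _ _) hn
    have hNKn : N K ≤ n := le_trans (le_max_right _ _) hn
    have hKk : K ≤ kf n := Nat.le_findGreatest hKn hNKn
    have hk : N (kf n) ≤ n := Nat.findGreatest_spec (P := fun k => N k ≤ n) hKn hNKn
    have h1 : dist (inner ℂ (x (kf n)) ((As n) (x (kf n))) : ℂ)
        (inner ℂ (x (kf n)) (A (x (kf n))) : ℂ) < 1 / (kf n + 1) := hNspec _ _ hk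
    have h2 : dist (inner ℂ (x (kf n)) (A (x (kf n))) : ℂ) z < 1 / (kf n + 1) := hx2 _
    have hle : (1:ℝ) / (kf n + 1) ≤ 1 / (K + 1) := by
      apply one_div_le_one_div_of_le (by positivity)
      exact_mod_cast Nat.succ_le_succ hKk
    calc dist (inner ℂ (x (kf n)) ((As n) (x (kf n))) : ℂ) z
        ≤ dist (inner ℂ (x (kf n)) ((As n) (x (kf n))) : ℂ)
            (inner ℂ (x (kf n)) (A (x (kf n))) : ℂ) + dist (inner ℂ (x (kf n)) (A (x (kf n))) : ℂ) z :=
          dist_triangle _ _ _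
      _ < 1 / (kf n + 1) + 1 / (kf n + 1) := add_lt_add h1 h2
      _ ≤ 1 / (K + 1) + 1 / (K + 1) := add_le_add hle hle
      _ < ε / 2 + ε / 2 := add_lt_add hK hK
      _ = ε := add_halves ε
end
end

section
/- Let n ≤ m be integers, let U_n, …, U_m ⊂ ℂ be nonempty compact sets and let A ∈ ΨE(U_n,…,U_m). Then N(A) = clos(⋃_{B ∈ M_per(U_n,…,U_m)} N(B)), the closure of the union of the numerical ranges of all periodic operators in M(U_n,…,U_m). -/
noncomputable section
open Filter Complex Topology
open scoped ENNReal

/-- The set of periodic operators in `M(U_n, …, U_m)`. -/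
def Mper (n m : ℤ) (U : ℤ → Set ℂ) : Set (HZ →L[ℂ] HZ) :=
  {B | B ∈ Mset n m U ∧ ∃ p : ℤ, 1 ≤ p ∧ ∀ i j : ℤ, entry B (i + p) (j + p) = entry B i j}

lemma inner_eZ_left (i : ℤ) (x : HZ) : (inner ℂ (eZ i) x : ℂ) = x i := by
  rw [eZ, lp.inner_single_left]; simp [RCLike.inner_apply]

lemma inner_eZ_right (i : ℤ) (x : HZ) : (inner ℂ x (eZ i) : ℂ) = starRingEnd ℂ (x i) := by
  rw [eZ, lp.inner_single_right]; simp [RCLike.inner_apply]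

lemma eZ_norm (i : ℤ) : ‖eZ i‖ = 1 := by
  have := lp.norm_single (p := 2) (E := fun _ : ℤ => ℂ) (by norm_num) i (1:ℂ)
  simpa [eZ] using this

lemma entry_bound (A : HZ →L[ℂ] HZ) (i j : ℤ) : ‖entry A i j‖ ≤ ‖A‖ := by
  calc ‖entry A i j‖ ≤ ‖eZ i‖ * ‖A (eZ j)‖ := norm_inner_le_norm _ _
  _ ≤ 1 * (‖A‖ * ‖eZ j‖) := by
      rw [eZ_norm]
      exact mul_le_mul_of_nonneg_left (A.le_opNorm _) zero_le_one
  _ = ‖A‖ := by rw [eZ_norm]; ring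
lemma memMul (f : ℤ → ℂ) (C : ℝ) (hf : ∀ j, ‖f j‖ ≤ C) (x : HZ) :
    Memℓp (fun j => f j * x j) 2 := by
  have hx := lp.memℓp x
  rw [memℓp_gen_iff (by norm_num)] at hx ⊢
  have hC : 0 ≤ C := le_trans (norm_nonneg (f 0)) (hf 0)
  refine Summable.of_nonneg_of_le (fun i => by positivity) (fun i => ?_) (hx.mul_left (C ^ (2:ℝ≥0∞).toReal))
  have : ‖f i * x i‖ ^ (2:ℝ≥0∞).toReal ≤ (C * ‖x i‖) ^ (2:ℝ≥0∞).toReal := by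
    apply Real.rpow_le_rpow (norm_nonneg _) _ (by norm_num)
    rw [norm_mul]
    exact mul_le_mul_of_nonneg_right (hf i) (norm_nonneg _)
  calc ‖f i * x i‖ ^ (2:ℝ≥0∞).toReal ≤ (C * ‖x i‖) ^ (2:ℝ≥0∞).toReal := this
  _ = C ^ (2:ℝ≥0∞).toReal * ‖x i‖ ^ (2:ℝ≥0∞).toReal := Real.mul_rpow hC (norm_nonneg _)

def mulLM (f : ℤ → ℂ) (C : ℝ) (hf : ∀ j, ‖f j‖ ≤ C) : HZ →ₗ[ℂ] HZ where
  toFun x := ⟨fun j => f j * x j, memMul f C hf x⟩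
  map_add' x y := by ext j; show f j * (x + y) j = (f j * x j + f j * y j); rw [lp.coeFn_add, Pi.add_apply, mul_add]
  map_smul' c x := by ext j; simp [lp.coeFn_smul]; ring

lemma mulLM_norm (f : ℤ → ℂ) (C : ℝ) (hf : ∀ j, ‖f j‖ ≤ C) (x : HZ) :
    ‖mulLM f C hf x‖ ≤ C * ‖x‖ := by
  have hC : 0 ≤ C := le_trans (norm_nonneg (f 0)) (hf 0)
  have h2 : (0:ℝ) < (2:ℝ≥0∞).toReal := by norm_num
  have key : ‖mulLM f C hf x‖ ^ (2:ℝ≥0∞).toReal ≤ (C * ‖x‖) ^ (2:ℝ≥0∞).toReal := by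
    rw [lp.norm_rpow_eq_tsum h2]
    rw [Real.mul_rpow hC (norm_nonneg _), lp.norm_rpow_eq_tsum h2, ← tsum_mul_left]
    have hx := lp.memℓp x
    rw [memℓp_gen_iff (by norm_num)] at hx
    apply Summable.tsum_le_tsum _ _ (hx.mul_left _)
    · intro i
      show ‖f i * x i‖ ^ (2:ℝ≥0∞).toReal ≤ C ^ (2:ℝ≥0∞).toReal * ‖x i‖ ^ (2:ℝ≥0∞).toReal
      rw [← Real.mul_rpow hC (norm_nonneg _)]
      apply Real.rpow_le_rpow (norm_nonneg _) _ (by norm_num)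
      rw [norm_mul]
      exact mul_le_mul_of_nonneg_right (hf i) (norm_nonneg _)
    · have hm := lp.memℓp (mulLM f C hf x)
      rwa [memℓp_gen_iff (by norm_num)] at hm
  have h22 : (2:ℝ≥0∞).toReal = ((2:ℕ):ℝ) := by norm_num
  rw [h22, Real.rpow_natCast, Real.rpow_natCast] at key
  exact pow_le_pow_iff_left₀ (norm_nonneg _) (mul_nonneg hC (norm_nonneg x)) (by norm_num) |>.mp key

def mulOp (f : ℤ → ℂ) (C : ℝ) (hf : ∀ j, ‖f j‖ ≤ C) : HZ →L[ℂ] HZ :=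
  LinearMap.mkContinuous (mulLM f C hf) C (mulLM_norm f C hf)

lemma mulOp_apply (f : ℤ → ℂ) (C : ℝ) (hf : ∀ j, ‖f j‖ ≤ C) (x : HZ) (j : ℤ) :
    (mulOp f C hf x) j = f j * x j := rfl

lemma Vshift_apply (k : ℤ) (x : HZ) (j : ℤ) : (Vshift k x) j = x (j - k) := rfl

lemma Vshift_norm_eq (k : ℤ) (x : HZ) : ‖Vshift k x‖ = ‖x‖ := shift_norm k x

lemma eZ_apply (i j : ℤ) : (eZ i : HZ) j = if j = i then 1 else 0 := by
  rw [eZ, lp.single_apply]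
  split_ifs with h
  · subst h; simp
  · simp [h]

lemma Vshift_eZ (k j : ℤ) : Vshift k (eZ j) = eZ (j + k) := by
  ext i
  rw [Vshift_apply, eZ_apply, eZ_apply]
  congr 1
  simp only [eq_iff_iff]
  omega

/-- Band operator with diagonals `c k` for `k ∈ [n, m]`. -/
def bandOp (n m : ℤ) (c : ℤ → ℤ → ℂ) (C : ℝ) (hc : ∀ k j, ‖c k j‖ ≤ C) : HZ →L[ℂ] HZ :=
  ∑ k ∈ Finset.Icc n m, (Vshift k) ∘L (mulOp (c k) C (hc k))

lemma bandOp_eZ (n m : ℤ) (c : ℤ → ℤ → ℂ) (C : ℝ) (hc : ∀ k j, ‖c k j‖ ≤ C) (j : ℤ) :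
    bandOp n m c C hc (eZ j) = ∑ k ∈ Finset.Icc n m, c k j • eZ (j + k) := by
  rw [bandOp, ContinuousLinearMap.sum_apply]
  refine Finset.sum_congr rfl fun k _ => ?_
  have h1 : mulOp (c k) C (hc k) (eZ j) = c k j • eZ j := by
    ext i
    rw [mulOp_apply, lp.coeFn_smul, Pi.smul_apply, eZ_apply]
    split_ifs with h
    · subst h; simp
    · simp
  rw [ContinuousLinearMap.comp_apply, h1, map_smul, Vshift_eZ]

lemma entry_bandOp (n m : ℤ) (c : ℤ → ℤ → ℂ) (C : ℝ) (hc : ∀ k j, ‖c k j‖ ≤ C) (i j : ℤ) :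
    entry (bandOp n m c C hc) i j =
      if n ≤ i - j ∧ i - j ≤ m then c (i - j) j else 0 := by
  rw [entry, bandOp_eZ, inner_sum]
  have : ∀ k ∈ Finset.Icc n m, (inner ℂ (eZ i) (c k j • eZ (j + k)) : ℂ) =
      if k = i - j then c k j else 0 := by
    intro k _
    rw [inner_smul_right, inner_eZ_left, eZ_apply]
    split_ifs with h1 h2 h2 <;> first | omega | simp
  rw [Finset.sum_congr rfl this, Finset.sum_ite_eq' (Finset.Icc n m) (i - j) (fun k => c k j)]
  simp only [Finset.mem_Icc]

/-- A finitely supported element equals the sum of its coordinates times basis vectors. -/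
lemma eq_sum_single (F : Finset ℤ) (x : HZ) (hx : ∀ i ∉ F, x i = 0) :
    x = ∑ i ∈ F, x i • eZ i := by
  ext j
  rw [lp.coeFn_sum, Finset.sum_apply]
  by_cases h : j ∈ F
  · rw [Finset.sum_eq_single j (fun i _ hij => by
      rw [lp.coeFn_smul, Pi.smul_apply, eZ_apply, if_neg (by omega)]; simp)
      (fun h' => absurd h h')]
    rw [lp.coeFn_smul, Pi.smul_apply, eZ_apply, if_pos rfl]; simp
  · rw [hx j h]
    symm
    apply Finset.sum_eq_zero
    intro i hi
    rw [lp.coeFn_smul, Pi.smul_apply, eZ_apply, if_neg (fun hh => h (by rw [hh]; exact hi))]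
    simp

lemma inner_quadratic' (T : HZ →L[ℂ] HZ) (F : Finset ℤ) (c : ℤ → ℂ) (x : HZ)
    (hx : x = ∑ i ∈ F, c i • eZ i) :
    (inner ℂ x (T x) : ℂ) =
      ∑ i ∈ F, ∑ j ∈ F, starRingEnd ℂ (c i) * (c j * entry T i j) := by
  subst hx
  rw [map_sum, sum_inner]
  refine Finset.sum_congr rfl fun i _ => ?_
  rw [inner_smul_left, inner_sum, Finset.mul_sum]
  refine Finset.sum_congr rfl fun j _ => ?_
  rw [map_smul, inner_smul_right]
  rfl

/-- Quadratic form of a finitely supported vector as a double sum of matrix entries. -/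
lemma inner_quadratic (T : HZ →L[ℂ] HZ) (F : Finset ℤ) (x : HZ) (hx : ∀ i ∉ F, x i = 0) :
    (inner ℂ x (T x) : ℂ) =
      ∑ i ∈ F, ∑ j ∈ F, starRingEnd ℂ (x i) * (x j * entry T i j) :=
  inner_quadratic' T F (fun i => x i) x (eq_sum_single F x hx)

lemma projIcc_apply (k l : ℤ) (x : HZ) :
    projIcc k l x = ∑ i ∈ Finset.Icc k l, x i • eZ i := by
  rw [projIcc, ContinuousLinearMap.sum_apply]
  refine Finset.sum_congr rfl fun i _ => ?_
  rw [ContinuousLinearMap.smulRight_apply, innerSL_apply_apply, inner_eZ_left]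

lemma projIcc_eq_self (k l : ℤ) (x : HZ) (hx : ∀ i ∉ Finset.Icc k l, x i = 0) :
    projIcc k l x = x := by
  rw [projIcc_apply]
  exact (eq_sum_single _ x hx).symm

lemma projIcc_symm (k l : ℤ) (x y : HZ) :
    (inner ℂ x (projIcc k l y) : ℂ) = inner ℂ (projIcc k l x) y := by
  rw [projIcc_apply, projIcc_apply, inner_sum, sum_inner]
  refine Finset.sum_congr rfl fun i _ => ?_
  rw [inner_smul_right, inner_smul_left, inner_eZ_right, inner_eZ_left]
  ring

/-- Lipschitz-type bound for the quadratic form. -/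
lemma quad_diff_bound (T : HZ →L[ℂ] HZ) (u x : HZ) :
    ‖(inner ℂ u (T u) : ℂ) - inner ℂ x (T x)‖ ≤ ‖T‖ * (‖u‖ + ‖x‖) * ‖u - x‖ := by
  have h : (inner ℂ u (T u) : ℂ) - inner ℂ x (T x) = inner ℂ u (T (u - x)) + inner ℂ (u - x) (T x) := by
    rw [map_sub, inner_sub_right, inner_sub_left]; ring
  rw [h]
  calc ‖(inner ℂ u (T (u - x)) : ℂ) + inner ℂ (u - x) (T x)‖
      ≤ ‖(inner ℂ u (T (u - x)) : ℂ)‖ + ‖(inner ℂ (u - x) (T x) : ℂ)‖ := norm_add_le _ _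
  _ ≤ ‖u‖ * ‖T (u - x)‖ + ‖u - x‖ * ‖T x‖ := by
      gcongr <;> exact norm_inner_le_norm _ _
  _ ≤ ‖u‖ * (‖T‖ * ‖u - x‖) + ‖u - x‖ * (‖T‖ * ‖x‖) := by
      gcongr <;> exact T.le_opNorm _
  _ = ‖T‖ * (‖u‖ + ‖x‖) * ‖u - x‖ := by ring

/-- Values of the quadratic form at finitely supported unit vectors. -/
def finSupQuad (T : HZ →L[ℂ] HZ) : Set ℂ :=
  {z | ∃ (x : HZ) (a b : ℤ), ‖x‖ = 1 ∧ (∀ i ∉ Finset.Icc a b, x i = 0) ∧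
    (inner ℂ x (T x) : ℂ) = z}

lemma numRange_eq_closure_finSupQuad (T : HZ →L[ℂ] HZ) :
    numRange T = closure (finSupQuad T) := by
  apply le_antisymm
  · apply closure_minimal _ isClosed_closure
    rintro z ⟨x, hx1, hx2⟩
    rw [Metric.mem_closure_iff]
    intro ε hε
    set δ : ℝ := min (1/2) (ε / (4 * ‖T‖ + 1)) with hδdef
    have hTn : (0:ℝ) ≤ ‖T‖ := norm_nonneg T
    have hδ : 0 < δ := lt_min (by norm_num) (by positivity)
    have hδ2 : δ ≤ 1/2 := min_le_left _ _
    have hδ3 : δ ≤ ε / (4 * ‖T‖ + 1) := min_le_right _ _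
    have hs := lp.hasSum_single (p := 2) (E := fun _ : ℤ => ℂ) (by norm_num) x
    have hev := Metric.tendsto_nhds.mp hs δ hδ
    change ∀ᶠ s in (atTop : Filter (Finset ℤ)), _ at hev
    rw [Filter.eventually_atTop] at hev
    obtain ⟨s₀, hs₀⟩ := hev
    have hne : (s₀ ∪ {0}).Nonempty := ⟨0, by simp⟩
    set a := (s₀ ∪ {0}).min' hne
    set b := (s₀ ∪ {0}).max' hne
    have hsub : s₀ ≤ Finset.Icc a b := by
      intro i hi
      rw [Finset.mem_Icc]
      exact ⟨Finset.min'_le _ _ (Finset.mem_union_left _ hi),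
        Finset.le_max' _ _ (Finset.mem_union_left _ hi)⟩
    set w : HZ := ∑ i ∈ Finset.Icc a b, lp.single 2 i (x i) with hw
    have hdist : ‖w - x‖ < δ := by
      have := hs₀ (Finset.Icc a b) hsub
      rwa [dist_eq_norm] at this
    have hwsupp : ∀ j ∉ Finset.Icc a b, w j = 0 := by
      intro j hj
      rw [hw, lp.coeFn_sum, Finset.sum_apply]
      apply Finset.sum_eq_zero
      intro i hi
      apply lp.single_apply_ne (E := fun _ : ℤ => ℂ) 2 i (x i)
      intro h
      exact hj (by rw [h]; exact hi)
    have hwn : 1 - δ ≤ ‖w‖ := by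
      have : ‖x‖ - ‖w‖ ≤ ‖x - w‖ := norm_sub_norm_le _ _
      rw [norm_sub_rev] at hdist
      rw [hx1] at this
      linarith
    have hwpos : 0 < ‖w‖ := by linarith
    set u : HZ := ‖w‖⁻¹ • w with hu
    have hun : ‖u‖ = 1 := by
      rw [hu, norm_smul, norm_inv, norm_norm, inv_mul_cancel₀ hwpos.ne']
    have husupp : ∀ j ∉ Finset.Icc a b, u j = 0 := by
      intro j hj
      rw [hu, lp.coeFn_smul, Pi.smul_apply, hwsupp j hj, smul_zero]
    have huw : ‖u - w‖ < δ := by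
      have : u - w = (‖w‖⁻¹ - 1) • w := by rw [sub_smul, one_smul, hu]
      rw [this, norm_smul]
      have habs : |‖w‖⁻¹ - 1| * ‖w‖ = |1 - ‖w‖| := by
        rw [← abs_of_pos hwpos, ← abs_mul, abs_of_pos hwpos]
        rw [sub_mul, inv_mul_cancel₀ hwpos.ne', one_mul, abs_sub_comm]
      rw [Real.norm_eq_abs, habs]
      calc |1 - ‖w‖| = |‖x‖ - ‖w‖| := by rw [hx1]
      _ ≤ ‖x - w‖ := abs_norm_sub_norm_le _ _
      _ < δ := by rwa [norm_sub_rev] at hdist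
    have hux : ‖u - x‖ < 2 * δ := by
      calc ‖u - x‖ ≤ ‖u - w‖ + ‖w - x‖ := norm_sub_le_norm_sub_add_norm_sub _ _ _
      _ < 2 * δ := by linarith
    refine ⟨inner ℂ u (T u), ⟨u, a, b, hun, husupp, rfl⟩, ?_⟩
    rw [dist_eq_norm, ← hx2]
    calc ‖(inner ℂ x (T x) : ℂ) - inner ℂ u (T u)‖
        = ‖(inner ℂ u (T u) : ℂ) - inner ℂ x (T x)‖ := norm_sub_rev _ _
    _ ≤ ‖T‖ * (‖u‖ + ‖x‖) * ‖u - x‖ := quad_diff_bound T u x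
    _ < ε := by
        rw [hun, hx1]
        have h1 : ‖T‖ * (1 + 1) * ‖u - x‖ ≤ ‖T‖ * 2 * (2 * δ) := by
          have := mul_le_mul_of_nonneg_left hux.le (by positivity : (0:ℝ) ≤ ‖T‖ * 2)
          linarith [this]
        have h2 : 4 * ‖T‖ * δ ≤ 4 * ‖T‖ * (ε / (4 * ‖T‖ + 1)) := by
          apply mul_le_mul_of_nonneg_left hδ3 (by positivity)
        have h3 : 4 * ‖T‖ * (ε / (4 * ‖T‖ + 1)) < ε := by
          rw [mul_div_assoc']
          rw [div_lt_iff₀ (by positivity)]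
          nlinarith
        linarith
  · apply closure_mono
    rintro z ⟨x, a, b, hx1, _, hx2⟩
    exact ⟨x, hx1, hx2⟩


lemma finSupQuad_subset_union (n m : ℤ) (U : ℤ → Set ℂ)
    (A : HZ →L[ℂ] HZ) (hA : A ∈ Mset n m U) :
    finSupQuad A ⊆ ⋃ B ∈ Mper n m U, numRange B := by
  rintro z ⟨x, a, b', hx1, hsupp', hquad⟩
  set b : ℤ := max b' a with hb
  have hab : a ≤ b := le_max_right _ _
  have hsupp : ∀ i ∉ Finset.Icc a b, x i = 0 := by
    intro i hi
    apply hsupp' i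
    rw [Finset.mem_Icc] at hi ⊢
    omega
  set p : ℤ := b - a + 1 with hpdef
  have hp : 1 ≤ p := by omega
  set c : ℤ → ℤ → ℂ := fun k j => entry A (a + ((j - a) % p) + k) (a + ((j - a) % p)) with hc
  have hcb : ∀ k j, ‖c k j‖ ≤ ‖A‖ := fun k j => entry_bound A _ _
  set B : HZ →L[ℂ] HZ := bandOp n m c ‖A‖ hcb with hB
  have hmod : ∀ j : ℤ, j ∈ Finset.Icc a b → (j - a) % p = j - a := by
    intro j hj
    rw [Finset.mem_Icc] at hj
    exact Int.emod_eq_of_lt (by omega) (by omega)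
  have hBM : B ∈ Mset n m U := by
    intro i k
    constructor
    · intro hk1 hk2
      rw [hB, entry_bandOp, if_pos (by constructor <;> omega)]
      have h1 : i + k - i = k := by omega
      rw [h1, hc]
      exact (hA (a + ((i - a) % p)) k).1 hk1 hk2
    · intro hk
      rw [hB, entry_bandOp, if_neg (by omega)]
  have hper : ∀ i j : ℤ, entry B (i + p) (j + p) = entry B i j := by
    intro i j
    rw [hB, entry_bandOp, entry_bandOp]
    have h1 : i + p - (j + p) = i - j := by ring
    rw [h1]
    congr 1
    show c (i - j) (j + p) = c (i - j) j
    simp only [hc]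
    have h2 : j + p - a = j - a + p * 1 := by ring
    rw [h2, Int.add_mul_emod_self_left]
  have hentry : ∀ i ∈ Finset.Icc a b, ∀ j ∈ Finset.Icc a b, entry B i j = entry A i j := by
    intro i hi j hj
    rw [hB, entry_bandOp]
    split_ifs with h
    · rw [hc]
      simp only
      rw [hmod j hj]
      have h1 : a + (j - a) + (i - j) = i := by ring
      have h2 : a + (j - a) = j := by ring
      rw [h1, h2]
    · symm
      have := (hA j (i - j)).2 (by omega)
      have h1 : j + (i - j) = i := by ring
      rwa [h1] at this
  have hqe : (inner ℂ x (B x) : ℂ) = inner ℂ x (A x) := by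
    rw [inner_quadratic B (Finset.Icc a b) x hsupp, inner_quadratic A (Finset.Icc a b) x hsupp]
    refine Finset.sum_congr rfl fun i hi => Finset.sum_congr rfl fun j hj => ?_
    rw [hentry i hi j hj]
  rw [Set.mem_iUnion₂]
  refine ⟨B, ⟨hBM, p, hp, hper⟩, ?_⟩
  apply subset_closure
  exact ⟨x, hx1, by rw [hqe, hquad]⟩

lemma inner_embedMat (k : ℤ) (s : ℕ) (b : Fin (s+1) → Fin (s+1) → ℂ) (y : HZ) :
    (inner ℂ y (embedMat k s b y) : ℂ) =
      ∑ p : Fin (s+1), ∑ q : Fin (s+1),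
        b p q * (y (k + (q:ℤ)) * starRingEnd ℂ (y (k + (p:ℤ)))) := by
  rw [embedMat, ContinuousLinearMap.sum_apply, inner_sum]
  refine Finset.sum_congr rfl fun p _ => ?_
  rw [ContinuousLinearMap.sum_apply, inner_sum]
  refine Finset.sum_congr rfl fun q _ => ?_
  rw [ContinuousLinearMap.smul_apply, inner_smul_right, ContinuousLinearMap.smulRight_apply,
    innerSL_apply_apply, inner_eZ_left, inner_smul_right, inner_eZ_right]

lemma finSupQuad_subset_numRange (n m : ℤ) (U : ℤ → Set ℂ)
    (A : HZ →L[ℂ] HZ) (hA : A ∈ PsiE n m U)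
    (B : HZ →L[ℂ] HZ) (hB : B ∈ Mset n m U) :
    finSupQuad B ⊆ numRange A := by
  rintro z ⟨x, a, b', hx1, hsupp', hquad⟩
  rw [numRange]
  rw [Metric.mem_closure_iff]
  intro ε hε
  set s : ℕ := (b' - a).toNat with hs
  have hsuppI : ∀ i ∉ Finset.Icc a (a + (s:ℤ)), x i = 0 := by
    intro i hi
    apply hsupp' i
    rw [Finset.mem_Icc] at hi ⊢
    omega
  set F : Finset ℤ := Finset.image (fun p : Fin (s+1) => a + (p:ℤ)) Finset.univ with hF
  have hinj : Function.Injective (fun p : Fin (s+1) => a + (p:ℤ)) := by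
    intro p q h
    simp only [add_right_inj, Nat.cast_inj] at h
    exact Fin.ext (by exact_mod_cast h)
  have hFI : Finset.Icc a (a + (s:ℤ)) ⊆ F := by
    intro i hi
    rw [Finset.mem_Icc] at hi
    rw [hF, Finset.mem_image]
    refine ⟨⟨(i - a).toNat, by omega⟩, Finset.mem_univ _, ?_⟩
    push_cast
    omega
  have hsuppF : ∀ i ∉ F, x i = 0 := fun i hi =>
    hsuppI i (fun h => hi (hFI h))
  -- the finite pattern from B
  set bm : Fin (s+1) → Fin (s+1) → ℂ := fun p q => entry B (a + (p:ℤ)) (a + (q:ℤ)) with hbm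
  have hpat : finPattern n m U s bm := by
    intro p q
    have harg : a + (p:ℤ) = (a + (q:ℤ)) + ((p:ℤ) - (q:ℤ)) := by ring
    constructor
    · intro h1 h2
      rw [hbm]
      simp only
      rw [harg]
      exact (hB (a + (q:ℤ)) ((p:ℤ) - (q:ℤ))).1 h1 h2
    · intro h
      rw [hbm]
      simp only
      rw [harg]
      exact (hB (a + (q:ℤ)) ((p:ℤ) - (q:ℤ))).2 h
  obtain ⟨k, hk⟩ := hA.2 (ε/2) (by positivity) s bm hpat
  set y : HZ := Vshift (k - a) x with hy
  have hyn : ‖y‖ = 1 := by rw [hy, Vshift_norm_eq, hx1]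
  have hyc : ∀ j : ℤ, y j = x (j - (k - a)) := fun j => rfl
  have hysupp : ∀ j ∉ Finset.Icc k (k + (s:ℤ)), y j = 0 := by
    intro j hj
    rw [hyc]
    apply hsuppI
    rw [Finset.mem_Icc] at hj ⊢
    omega
  have hPy : projIcc k (k + (s:ℤ)) y = y := projIcc_eq_self _ _ y hysupp
  set P : HZ →L[ℂ] HZ := projIcc k (k + (s:ℤ)) with hP
  have hPAP : (inner ℂ y ((P ∘L A ∘L P) y) : ℂ) = inner ℂ y (A y) := by
    rw [ContinuousLinearMap.comp_apply, ContinuousLinearMap.comp_apply, hP, projIcc_symm,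
      ← hP, hPy]
  -- quadratic form identities
  have hyx : ∀ p : Fin (s+1), y (k + (p:ℤ)) = x (a + (p:ℤ)) := by
    intro p
    rw [hyc]
    have h : k + (p:ℤ) - (k - a) = a + (p:ℤ) := by ring
    rw [h]
  have hEy : (inner ℂ y (embedMat k s bm y) : ℂ) = inner ℂ x (B x) := by
    rw [inner_embedMat, inner_quadratic B F x hsuppF]
    rw [hF, Finset.sum_image (fun p _ q _ h => hinj h)]
    refine Finset.sum_congr rfl fun p _ => ?_
    rw [Finset.sum_image (fun p _ q _ h => hinj h)]
    refine Finset.sum_congr rfl fun q _ => ?_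
    rw [hyx, hyx, hbm]
    ring
  -- conclude
  have hdiff : ‖(inner ℂ y (A y) : ℂ) - inner ℂ x (B x)‖ ≤ ε/2 := by
    rw [← hPAP, ← hEy]
    have : (inner ℂ y ((P ∘L A ∘L P) y) : ℂ) - inner ℂ y (embedMat k s bm y) =
        inner ℂ y (((P ∘L A ∘L P) - embedMat k s bm) y) := by
      rw [ContinuousLinearMap.sub_apply, inner_sub_right]
    rw [this]
    calc ‖(inner ℂ y (((P ∘L A ∘L P) - embedMat k s bm) y) : ℂ)‖
        ≤ ‖y‖ * ‖((P ∘L A ∘L P) - embedMat k s bm) y‖ := norm_inner_le_norm _ _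
    _ ≤ ‖y‖ * (‖(P ∘L A ∘L P) - embedMat k s bm‖ * ‖y‖) := by
        gcongr
        exact ContinuousLinearMap.le_opNorm _ _
    _ ≤ ε/2 := by rw [hyn, one_mul, mul_one]; exact hk
  refine ⟨inner ℂ y (A y), ⟨y, hyn, rfl⟩, ?_⟩
  rw [dist_eq_norm, ← hquad, norm_sub_rev]
  calc ‖(inner ℂ y (A y) : ℂ) - inner ℂ x (B x)‖ ≤ ε/2 := hdiff
  _ < ε := by linarith

/-- For pseudo-ergodic `A`,
`N(A) = clos(⋃_{B ∈ M_per(U_n,…,U_m)} N(B))`. -/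
theorem numRange_eq_closure_iUnion_periodic_of_pseudoErgodic
    (n m : ℤ) (hnm : n ≤ m) (U : ℤ → Set ℂ)
    (hU : ∀ k : ℤ, n ≤ k → k ≤ m → (U k).Nonempty ∧ IsCompact (U k))
    (A : HZ →L[ℂ] HZ) (hA : A ∈ PsiE n m U) :
    numRange A = closure (⋃ B ∈ Mper n m U, numRange B) := by
  apply le_antisymm
  · rw [numRange_eq_closure_finSupQuad]
    exact closure_mono (finSupQuad_subset_union n m U A hA.1)
  · apply closure_minimal _ (by rw [numRange]; exact isClosed_closure)
    refine Set.iUnion₂_subset fun B hB => ?_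
    rw [numRange_eq_closure_finSupQuad]
    exact closure_minimal (finSupQuad_subset_numRange n m U A hA B hB.1)
      (by rw [numRange]; exact isClosed_closure)
end
end
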